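/- Let n ≥ 1, μ > 0 and σ² ≥ 0. Let f* denote the two-point probability measure (σ²/(μ² + σ²))·δ₀ + (μ²/(μ² + σ²))·δ_{μ + σ²/μ}. Suppose 𝒫₁, …, 𝒫ₙ are sets of Borel probability measures on [0,∞) such that every measure in every 𝒫ᵢ has mean μ, and f* ∈ 𝒫ᵢ for every i. Then the robust thresholds satisfy μ ≤ T(i) ≤ μ + σ²/μ for every i with 0 ≤ i ≤ n − 1. -/

import Mathlib

open MeasureTheory

/-- Backward robust thresholds: `robustTAux Ps n k = T(n - k)`, where
`T(n) = 0` and `T(i) = inf_{P ∈ Ps (i+1)} ∫ max (T (i+1)) x dP`. -/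
noncomputable def robustTAux (Ps : ℕ → Set (Measure ℝ)) (n : ℕ) : ℕ → ℝ
  | 0 => 0
  | k + 1 => sInf ((fun P => ∫ x, max (robustTAux Ps n k) x ∂P) '' Ps (n - k))

/-- The robust threshold `T(i)` for `0 ≤ i ≤ n`. -/
noncomputable def robustT (Ps : ℕ → Set (Measure ℝ)) (n i : ℕ) : ℝ :=
  robustTAux Ps n (n - i)

/-- The two-point measure `f* = (σ²/(μ²+σ²))·δ₀ + (μ²/(μ²+σ²))·δ_{μ+σ²/μ}`. -/
noncomputable def fstar (μ s2 : ℝ) : Measure ℝ :=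
  ENNReal.ofReal (s2 / (μ ^ 2 + s2)) • Measure.dirac 0 +
    ENNReal.ofReal (μ ^ 2 / (μ ^ 2 + s2)) • Measure.dirac (μ + s2 / μ)

lemma integrable_dirac' {g : ℝ → ℝ} {a : ℝ} : Integrable g (Measure.dirac a) :=
  (integrable_congr (MeasureTheory.ae_eq_dirac g)).mpr (integrable_const _)

lemma integral_fstar (μ s2 : ℝ) (hμ : 0 < μ) (hs2 : 0 ≤ s2) (g : ℝ → ℝ) :
    ∫ x, g x ∂(fstar μ s2)
      = s2 / (μ ^ 2 + s2) * g 0 + μ ^ 2 / (μ ^ 2 + s2) * g (μ + s2 / μ) := by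
  have h0 : (0:ℝ) ≤ s2 / (μ ^ 2 + s2) := by positivity
  have h1 : (0:ℝ) ≤ μ ^ 2 / (μ ^ 2 + s2) := by positivity
  unfold fstar
  rw [integral_add_measure (integrable_dirac'.smul_measure ENNReal.ofReal_ne_top)
      (integrable_dirac'.smul_measure ENNReal.ofReal_ne_top),
    integral_smul_measure, integral_smul_measure, integral_dirac, integral_dirac,
    ENNReal.toReal_ofReal h0, ENNReal.toReal_ofReal h1, smul_eq_mul, smul_eq_mul]

theorem stmt7 (n : ℕ) (hn : 1 ≤ n) (μ s2 : ℝ) (hμ : 0 < μ) (hs2 : 0 ≤ s2)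
    (Ps : ℕ → Set (Measure ℝ))
    (hprob : ∀ i, 1 ≤ i → i ≤ n → ∀ P ∈ Ps i, IsProbabilityMeasure P)
    (hsupp : ∀ i, 1 ≤ i → i ≤ n → ∀ P ∈ Ps i, P (Set.Ici (0 : ℝ)) = 1)
    (hint : ∀ i, 1 ≤ i → i ≤ n → ∀ P ∈ Ps i, Integrable (fun x : ℝ => x) P)
    (hmean : ∀ i, 1 ≤ i → i ≤ n → ∀ P ∈ Ps i, (∫ x, x ∂P) = μ)
    (hf : ∀ i, 1 ≤ i → i ≤ n → fstar μ s2 ∈ Ps i) :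
    ∀ i : ℕ, i + 1 ≤ n → μ ≤ robustT Ps n i ∧ robustT Ps n i ≤ μ + s2 / μ := by
  have hc : (0:ℝ) ≤ μ + s2 / μ := by positivity
  -- main induction on k
  have key : ∀ k, k ≤ n →
      (0 ≤ robustTAux Ps n k ∧ robustTAux Ps n k ≤ μ + s2 / μ) ∧
      (1 ≤ k → μ ≤ robustTAux Ps n k) := by
    intro k
    induction k with
    | zero => intro _; simp [robustTAux, hc]
    | succ k ih =>
      intro hk1
      obtain ⟨⟨ht0, htc⟩, -⟩ := ih (by omega)
      set t := robustTAux Ps n k with htdef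
      have hi1 : 1 ≤ n - k := by omega
      have hi2 : n - k ≤ n := by omega
      have hflb : ∀ y ∈ (fun P => ∫ x, max t x ∂P) '' Ps (n - k), μ ≤ y := by
        rintro y ⟨P, hP, rfl⟩
        have hintx := hint _ hi1 hi2 P hP
        haveI := hprob _ hi1 hi2 P hP
        have hintm : Integrable (fun x : ℝ => max t x) P := by
          have := (integrable_const t).sup hintx
          simpa [Pi.sup_def] using this
        calc μ = ∫ x, x ∂P := (hmean _ hi1 hi2 P hP).symm
          _ ≤ ∫ x, max t x ∂P := integral_mono hintx hintm fun x => le_max_right _ _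
      have hne : ((fun P => ∫ x, max t x ∂P) '' Ps (n - k)).Nonempty :=
        ⟨_, ⟨fstar μ s2, hf _ hi1 hi2, rfl⟩⟩
      have hbdd : BddBelow ((fun P => ∫ x, max t x ∂P) '' Ps (n - k)) := ⟨μ, hflb⟩
      have hlb : μ ≤ robustTAux Ps n (k + 1) := by
        rw [robustTAux]
        exact le_csInf hne hflb
      have hub : robustTAux Ps n (k + 1) ≤ μ + s2 / μ := by
        rw [robustTAux]
        have hmem : (∫ x, max t x ∂(fstar μ s2)) ∈
            (fun P => ∫ x, max t x ∂P) '' Ps (n - k) := ⟨fstar μ s2, hf _ hi1 hi2, rfl⟩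
        refine (csInf_le hbdd hmem).trans ?_
        rw [integral_fstar μ s2 hμ hs2 (fun x => max t x)]
        have hmax0 : max t 0 = t := max_eq_left ht0
        have hmaxc : max t (μ + s2 / μ) = μ + s2 / μ := max_eq_right htc
        rw [hmax0, hmaxc]
        have hsum : s2 / (μ ^ 2 + s2) + μ ^ 2 / (μ ^ 2 + s2) = 1 := by
          field_simp
          ring
        nlinarith [div_nonneg hs2 (by positivity : (0:ℝ) ≤ μ ^ 2 + s2),
          div_nonneg (sq_nonneg μ) (by positivity : (0:ℝ) ≤ μ ^ 2 + s2)]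
      exact ⟨⟨le_trans hμ.le hlb, hub⟩, fun _ => hlb⟩
  intro i hi
  have h1 : 1 ≤ n - i := by omega
  have h2 : n - i ≤ n := by omega
  obtain ⟨⟨-, hub⟩, hlb⟩ := key (n - i) h2
  exact ⟨hlb h1, hub⟩
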